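/- There exists a constant C > 0 such that for all real y, z and all s > 0, |∂²/(∂y ∂s) W_s(y,z)| ≤ C e^{-((y - e^{-s}z)^2 + (z - e^{-s}y)^2)/(16(1 - e^{-2s}))} · e^{-s/2} (1 - e^{-2s})^{-2}, where W_s is the Hermite heat kernel. -/

import Mathlib

open MeasureTheory Real

/-- The Hermite (Mehler) heat kernel `W_s(x,y)`. -/
noncomputable def hermiteHeatKernel (s x y : ℝ) : ℝ :=
  Real.pi ^ (-(1 : ℝ) / 2) * (Real.exp (-s) / (1 - Real.exp (-2 * s))) ^ ((1 : ℝ) / 2) *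
    Real.exp (-((x - Real.exp (-s) * y) ^ 2 + (y - Real.exp (-s) * x) ^ 2) /
      (2 * (1 - Real.exp (-2 * s))))

/-- log of the kernel. -/
noncomputable def gAux (z s y : ℝ) : ℝ :=
  -Real.log Real.pi / 2 - s / 2 - Real.log (1 - Real.exp (-2 * s)) / 2 -
    ((y - Real.exp (-s) * z) ^ 2 + (z - Real.exp (-s) * y) ^ 2) /
      (2 * (1 - Real.exp (-2 * s)))

/-- s-derivative of `gAux`. -/
noncomputable def dsAux (z s y : ℝ) : ℝ :=
  -(1/2) - Real.exp (-2 * s) / (1 - Real.exp (-2 * s)) -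
    (2 * (y - Real.exp (-s) * z) * (Real.exp (-s) * z) +
      2 * (z - Real.exp (-s) * y) * (Real.exp (-s) * y)) / (2 * (1 - Real.exp (-2 * s))) +
    ((y - Real.exp (-s) * z) ^ 2 + (z - Real.exp (-s) * y) ^ 2) * Real.exp (-2 * s) /
      (1 - Real.exp (-2 * s)) ^ 2

/-- y-derivative of `gAux`. -/
noncomputable def gyAux (z s y : ℝ) : ℝ :=
  -(2 * (y - Real.exp (-s) * z) - 2 * Real.exp (-s) * (z - Real.exp (-s) * y)) /
    (2 * (1 - Real.exp (-2 * s)))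

/-- y-derivative of `dsAux`. -/
noncomputable def dsyAux (z s y : ℝ) : ℝ :=
  -(4 * Real.exp (-s) * (z - Real.exp (-s) * y)) / (2 * (1 - Real.exp (-2 * s))) +
    (2 * (y - Real.exp (-s) * z) - 2 * Real.exp (-s) * (z - Real.exp (-s) * y)) *
      Real.exp (-2 * s) / (1 - Real.exp (-2 * s)) ^ 2

lemma rAux_pos {s : ℝ} (hs : 0 < s) : 0 < 1 - Real.exp (-2 * s) := by
  have : Real.exp (-2 * s) < 1 := Real.exp_lt_one_iff.mpr (by linarith)
  linarith

lemma exp_neg_two_mul' (s : ℝ) : Real.exp (-2 * s) = Real.exp (-s) ^ 2 := by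
  rw [sq, ← Real.exp_add]; ring_nf

lemma kernel_eq_exp (z s y : ℝ) (hs : 0 < s) :
    hermiteHeatKernel s y z = Real.exp (gAux z s y) := by
  have hr := rAux_pos hs
  have hπ : (0:ℝ) < Real.pi := Real.pi_pos
  have hq : 0 < Real.exp (-s) := Real.exp_pos _
  rw [hermiteHeatKernel, gAux,
    Real.rpow_def_of_pos hπ, Real.rpow_def_of_pos (div_pos hq hr),
    Real.log_div (ne_of_gt hq) (ne_of_gt hr), Real.log_exp,
    ← Real.exp_add, ← Real.exp_add]
  congr 1
  ring

set_option maxHeartbeats 1000000 in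
lemma hasDerivAt_gAux_s (z y : ℝ) {s : ℝ} (hs : 0 < s) :
    HasDerivAt (fun s => gAux z s y) (dsAux z s y) s := by
  have hr := rAux_pos hs
  have hrne : (1 - Real.exp (-2 * s)) ≠ 0 := ne_of_gt hr
  have h2 : HasDerivAt (fun s : ℝ => Real.exp (-2 * s)) (Real.exp (-2 * s) * (-2)) s := by
    simpa using (((hasDerivAt_id s).const_mul (-2 : ℝ)).exp)
  have hrd := (hasDerivAt_const s (1:ℝ)).sub h2
  have h1 : HasDerivAt (fun s : ℝ => Real.exp (-s)) (Real.exp (-s) * (-1)) s := by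
    simpa using (((hasDerivAt_id s).const_mul (-1 : ℝ)).exp)
  have ha := ((hasDerivAt_const s y).sub (h1.mul_const z)).pow 2
  have hb := ((hasDerivAt_const s z).sub (h1.mul_const y)).pow 2
  have hP := ha.add hb
  have hden := hrd.const_mul (2:ℝ)
  have hfrac := hP.div hden (by positivity)
  have hgoal := ((((hasDerivAt_const s (-Real.log Real.pi / 2)).sub
      ((hasDerivAt_id s).div_const 2)).sub (hrd.log hrne |>.div_const 2)).sub hfrac)
  refine hgoal.congr_deriv ?_
  rw [dsAux]
  simp only [Nat.cast_ofNat, pow_one, id_eq, Pi.sub_apply, Pi.add_apply, Pi.pow_apply, Pi.mul_apply,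
    Pi.div_apply]
  generalize Real.exp (-2 * s) = Q at hrne ⊢
  generalize Real.exp (-s) = q
  field_simp [hrne]
  ring

lemma deriv_s_kernel (z y : ℝ) {s : ℝ} (hs : 0 < s) :
    deriv (fun s => hermiteHeatKernel s y z) s = Real.exp (gAux z s y) * dsAux z s y := by
  have hev : (fun s => hermiteHeatKernel s y z) =ᶠ[nhds s] fun s => Real.exp (gAux z s y) := by
    filter_upwards [isOpen_Ioi.mem_nhds hs] with t ht
    exact kernel_eq_exp z t y ht
  have hd : HasDerivAt (fun s => Real.exp (gAux z s y))
      (Real.exp (gAux z s y) * dsAux z s y) s := (hasDerivAt_gAux_s z y hs).exp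
  exact (hd.congr_of_eventuallyEq hev).deriv

lemma hasDerivAt_gAux_y (z s y : ℝ) (hs : 0 < s) :
    HasDerivAt (fun y => gAux z s y) (gyAux z s y) y := by
  have hr := rAux_pos hs
  have hrne : (1 - Real.exp (-2 * s)) ≠ 0 := ne_of_gt hr
  have ha := ((hasDerivAt_id y).sub_const (Real.exp (-s) * z)).pow 2
  have hb := ((hasDerivAt_const y z).sub ((hasDerivAt_id y).const_mul (Real.exp (-s)))).pow 2
  have hP := (ha.add hb).div_const (2 * (1 - Real.exp (-2 * s)))
  have hgoal := (((hasDerivAt_const y (-Real.log Real.pi / 2)).sub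
      (hasDerivAt_const y (s / 2))).sub
      (hasDerivAt_const y (Real.log (1 - Real.exp (-2 * s)) / 2))).sub hP
  refine hgoal.congr_deriv ?_
  rw [gyAux]
  simp only [Nat.cast_ofNat, pow_one, id_eq, Pi.sub_apply, Pi.add_apply, Pi.pow_apply, Pi.mul_apply,
    Pi.div_apply]
  generalize Real.exp (-2 * s) = Q at hrne ⊢
  generalize Real.exp (-s) = q
  field_simp [hrne]
  ring

set_option maxHeartbeats 1000000 in
lemma hasDerivAt_dsAux_y (z s y : ℝ) (hs : 0 < s) :
    HasDerivAt (fun y => dsAux z s y) (dsyAux z s y) y := by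
  have hr := rAux_pos hs
  have hrne : (1 - Real.exp (-2 * s)) ≠ 0 := ne_of_gt hr
  have hA := (((hasDerivAt_id y).sub_const (Real.exp (-s) * z)).const_mul
      (2:ℝ)).mul_const (Real.exp (-s) * z)
  have hzb := (hasDerivAt_const y z).sub ((hasDerivAt_id y).const_mul (Real.exp (-s)))
  have hB := (hzb.const_mul (2:ℝ)).mul (((hasDerivAt_id y).const_mul (Real.exp (-s))))
  have hsum := (hA.add hB).div_const (2 * (1 - Real.exp (-2 * s)))
  have ha := ((hasDerivAt_id y).sub_const (Real.exp (-s) * z)).pow 2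
  have hb := ((hasDerivAt_const y z).sub ((hasDerivAt_id y).const_mul (Real.exp (-s)))).pow 2
  have hP := ((ha.add hb).mul_const (Real.exp (-2 * s))).div_const
      ((1 - Real.exp (-2 * s)) ^ 2)
  have hgoal := (((hasDerivAt_const y (-(1/2) : ℝ)).sub
      (hasDerivAt_const y (Real.exp (-2 * s) / (1 - Real.exp (-2 * s))))).sub hsum).add hP
  refine hgoal.congr_deriv ?_
  rw [dsyAux]
  simp only [Nat.cast_ofNat, pow_one, id_eq, Pi.sub_apply, Pi.add_apply, Pi.pow_apply, Pi.mul_apply,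
    Pi.div_apply]
  generalize Real.exp (-2 * s) = Q at hrne ⊢
  generalize Real.exp (-s) = q
  field_simp [hrne]
  ring

lemma hasDerivAt_prod (z s y : ℝ) (hs : 0 < s) :
    HasDerivAt (fun y => Real.exp (gAux z s y) * dsAux z s y)
      (Real.exp (gAux z s y) * (gyAux z s y * dsAux z s y + dsyAux z s y)) y := by
  have h1 := (hasDerivAt_gAux_y z s y hs).exp
  have h2 := hasDerivAt_dsAux_y z s y hs
  exact (h1.mul h2).congr_deriv (by ring)

private lemma key_poly (sp sr P r E : ℝ) (hsp0 : 0 ≤ sp) (hP0 : 0 ≤ P) (hr0 : 0 < r)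
    (hr1 : r ≤ 1) (hsp2 : sp ^ 2 = P) (hsr2 : sr ^ 2 = r) (hsr0 : 0 ≤ sr)
    (hE2 : r ^ 2 + 7 / 16 * P * r + 49 / 512 * P ^ 2 ≤ E * r ^ 2) :
    (3 * sp * r ^ 2 + 6 * sp * r + 6 * sp * P) * sr ≤ 100 * (E * r ^ 2) := by
  have h5 : sp * sr ≤ (P + r) / 2 := by nlinarith [sq_nonneg (sp - sr)]
  have m2 : (sp * sr) * (3 * r ^ 2 + 6 * r + 6 * P) ≤
      ((P + r) / 2) * (3 * r ^ 2 + 6 * r + 6 * P) :=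
    mul_le_mul_of_nonneg_right h5 (by positivity)
  have m3 : ((P + r) / 2) * (3 * r ^ 2 + 6 * r + 6 * P) ≤
      100 * (r ^ 2 + 7 / 16 * P * r + 49 / 512 * P ^ 2) := by
    nlinarith [mul_nonneg (mul_nonneg hP0 hr0.le) (sub_nonneg.mpr hr1),
      mul_nonneg (mul_nonneg hr0.le hr0.le) (sub_nonneg.mpr hr1)]
  nlinarith [m2, m3, hE2]

set_option maxHeartbeats 2000000 in
lemma main_bound (z s y : ℝ) (hs : 0 < s) :
    |Real.exp (gAux z s y) * (gyAux z s y * dsAux z s y + dsyAux z s y)| ≤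
      100 * Real.exp (-((y - Real.exp (-s) * z) ^ 2 + (z - Real.exp (-s) * y) ^ 2) /
          (16 * (1 - Real.exp (-2 * s)))) *
        Real.exp (-s / 2) * (1 - Real.exp (-2 * s)) ^ (-(2 : ℝ)) := by
  have hr0 := rAux_pos hs
  have hQq := exp_neg_two_mul' s
  simp only [gAux, dsAux, gyAux, dsyAux]
  rw [hQq] at hr0 ⊢
  set e := Real.exp (-s) with he_def
  set r := 1 - e ^ 2 with hr_def
  set a := y - e * z with ha_def
  set b := z - e * y with hb_def
  set P := a ^ 2 + b ^ 2 with hP_def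
  have he : 0 < e := Real.exp_pos _
  have he1 : e ≤ 1 := Real.exp_le_one_iff.mpr (by linarith)
  have hrne : r ≠ 0 := ne_of_gt hr0
  have h1e : (1 : ℝ) - e ^ 2 ≠ 0 := by rw [← hr_def]; exact hrne
  have hr1 : r ≤ 1 := by rw [hr_def]; nlinarith [sq_nonneg e]
  have hP0 : 0 ≤ P := by rw [hP_def]; positivity
  -- the three polynomial identities
  have hGYr : -(2 * a - 2 * e * b) / (2 * r) * r = e * b - a := by
    field_simp [hrne]
    ring
  have hDSr : (-(1/2) - e ^ 2 / r - (2 * a * (e * z) + 2 * b * (e * y)) / (2 * r) +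
      P * e ^ 2 / r ^ 2) * r ^ 2 = -(r ^ 2) / 2 - e ^ 2 * r - 2 * a * b * e := by
    rw [hP_def, ha_def, hb_def, hr_def]
    field_simp [h1e]
    ring
  have hDSYr : (-(4 * e * b) / (2 * r) + (2 * a - 2 * e * b) * e ^ 2 / r ^ 2) * r ^ 2 =
      -2 * e * b * r + (2 * a - 2 * e * b) * e ^ 2 := by
    field_simp [hrne]
    ring
  set GY := -(2 * a - 2 * e * b) / (2 * r) with hGY_def
  set DS := -(1/2) - e ^ 2 / r - (2 * a * (e * z) + 2 * b * (e * y)) / (2 * r) +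
      P * e ^ 2 / r ^ 2 with hDS_def
  set DSY := -(4 * e * b) / (2 * r) + (2 * a - 2 * e * b) * e ^ 2 / r ^ 2 with hDSY_def
  clear_value GY DS DSY
  clear hGY_def hDS_def hDSY_def
  clear_value P b a r e
  -- now everything is opaque
  have hsp0 : 0 ≤ Real.sqrt P := Real.sqrt_nonneg _
  have hsr0 : 0 < Real.sqrt r := Real.sqrt_pos.mpr hr0
  have hsp2 : Real.sqrt P ^ 2 = P := Real.sq_sqrt hP0
  have hsr2 : Real.sqrt r ^ 2 = r := Real.sq_sqrt hr0.le
  have ha_le : |a| ≤ Real.sqrt P := by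
    rw [← Real.sqrt_sq_eq_abs]
    exact Real.sqrt_le_sqrt (by rw [hP_def]; nlinarith [sq_nonneg b])
  have hb_le : |b| ≤ Real.sqrt P := by
    rw [← Real.sqrt_sq_eq_abs]
    exact Real.sqrt_le_sqrt (by rw [hP_def]; nlinarith [sq_nonneg a])
  obtain ⟨sp, hsp_def⟩ : ∃ sp, Real.sqrt P = sp := ⟨_, rfl⟩
  obtain ⟨sr, hsr_def⟩ : ∃ sr, Real.sqrt r = sr := ⟨_, rfl⟩
  rw [hsp_def] at hsp0 hsp2 ha_le hb_le
  rw [hsr_def] at hsr0 hsr2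
  obtain ⟨ha1, ha2⟩ := abs_le.mp ha_le
  obtain ⟨hb1, hb2⟩ := abs_le.mp hb_le
  -- abs bounds on the polynomial pieces
  have hga : |e * b - a| ≤ 2 * sp := by
    rw [abs_le]
    constructor <;> nlinarith [mul_nonneg he.le (sub_nonneg.mpr hb1),
      mul_nonneg he.le (sub_nonneg.mpr hb2), mul_nonneg hsp0 (sub_nonneg.mpr he1)]
  have h2ab : 2 * a * b ≤ P := by nlinarith [sq_nonneg (a - b)]
  have h2ab' : -P ≤ 2 * a * b := by nlinarith [sq_nonneg (a + b)]
  have hdsb : |-(r ^ 2) / 2 - e ^ 2 * r - 2 * a * b * e| ≤ r ^ 2 / 2 + r + 3 * P := by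
    rw [abs_le]
    constructor <;>
      nlinarith [mul_nonneg (sub_nonneg.mpr h2ab) he.le,
        mul_nonneg (sub_nonneg.mpr h2ab') he.le,
        mul_nonneg hP0 (sub_nonneg.mpr he1), sq_nonneg e,
        mul_nonneg (mul_nonneg he.le he.le) hr0.le]
  have heb1 : -sp ≤ e * b := by
    nlinarith [mul_nonneg he.le (sub_nonneg.mpr hb1), mul_nonneg hsp0 (sub_nonneg.mpr he1)]
  have heb2 : e * b ≤ sp := by
    nlinarith [mul_nonneg he.le (sub_nonneg.mpr hb2), mul_nonneg hsp0 (sub_nonneg.mpr he1)]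
  have hee : e ^ 2 ≤ 1 := by nlinarith
  have hdsyb : |-2 * e * b * r + (2 * a - 2 * e * b) * e ^ 2| ≤ 2 * sp * r + 4 * sp := by
    rw [abs_le]
    constructor <;>
      nlinarith [mul_nonneg (sub_nonneg.mpr heb2) hr0.le,
        mul_nonneg (sub_nonneg.mpr heb1) hr0.le,
        mul_nonneg hsp0 (sub_nonneg.mpr hr1),
        mul_nonneg (sub_nonneg.mpr ha2) (sq_nonneg e),
        mul_nonneg (sub_nonneg.mpr ha1) (sq_nonneg e),
        mul_nonneg (sub_nonneg.mpr heb2) (sq_nonneg e),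
        mul_nonneg (sub_nonneg.mpr heb1) (sq_nonneg e),
        mul_nonneg hsp0 (sub_nonneg.mpr hee)]
  have hXpoly : (GY * DS + DSY) * r ^ 3 =
      (e * b - a) * (-(r ^ 2) / 2 - e ^ 2 * r - 2 * a * b * e) +
        (-2 * e * b * r + (2 * a - 2 * e * b) * e ^ 2) * r := by
    linear_combination (DS * r ^ 2) * hGYr + (e * b - a) * hDSr + r * hDSYr
  have hXN : |GY * DS + DSY| * r ^ 3 ≤ 3 * sp * r ^ 2 + 6 * sp * r + 6 * sp * P := by
    have h0 : |GY * DS + DSY| * r ^ 3 = |(GY * DS + DSY) * r ^ 3| := by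
      rw [abs_mul, abs_of_pos (pow_pos hr0 3)]
    rw [h0, hXpoly]
    calc |(e * b - a) * (-(r ^ 2) / 2 - e ^ 2 * r - 2 * a * b * e) +
          (-2 * e * b * r + (2 * a - 2 * e * b) * e ^ 2) * r|
        ≤ |(e * b - a) * (-(r ^ 2) / 2 - e ^ 2 * r - 2 * a * b * e)| +
          |(-2 * e * b * r + (2 * a - 2 * e * b) * e ^ 2) * r| := abs_add_le _ _
      _ = |e * b - a| * |-(r ^ 2) / 2 - e ^ 2 * r - 2 * a * b * e| +
          |-2 * e * b * r + (2 * a - 2 * e * b) * e ^ 2| * r := by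
          rw [abs_mul, abs_mul, abs_of_pos hr0]
      _ ≤ (2 * sp) * (r ^ 2 / 2 + r + 3 * P) + (2 * sp * r + 4 * sp) * r :=
          add_le_add (mul_le_mul hga hdsb (abs_nonneg _) (by positivity))
            (mul_le_mul_of_nonneg_right hdsyb hr0.le)
      _ = 3 * sp * r ^ 2 + 6 * sp * r + 6 * sp * P := by ring
  -- exponential series bound
  have hEpos : 0 < Real.exp (7 * P / (16 * r)) := Real.exp_pos _
  have hv0 : 0 ≤ 7 * P / (16 * r) := by positivity
  have hseries : 1 + 7 * P / (16 * r) + (7 * P / (16 * r)) ^ 2 / 2 ≤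
      Real.exp (7 * P / (16 * r)) := by
    have h := Real.sum_le_exp_of_nonneg hv0 3
    norm_num [Finset.sum_range_succ] at h
    convert h using 2 <;> ring
  have hE2 : r ^ 2 + 7 / 16 * P * r + 49 / 512 * P ^ 2 ≤
      Real.exp (7 * P / (16 * r)) * r ^ 2 := by
    have h := mul_le_mul_of_nonneg_right hseries (sq_nonneg r)
    have heq : (1 + 7 * P / (16 * r) + (7 * P / (16 * r)) ^ 2 / 2) * r ^ 2 =
        r ^ 2 + 7 / 16 * P * r + 49 / 512 * P ^ 2 := by
      field_simp [hrne]
      ring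
    linarith [heq ▸ h]
  have hkey := key_poly sp sr P r _ hsp0 hP0 hr0 hr1 hsp2 hsr2 hsr0.le hE2
  have hXb : |GY * DS + DSY| ≤ 100 * Real.exp (7 * P / (16 * r)) / (r * sr) := by
    rw [le_div_iff₀ (by positivity)]
    have h2 := mul_le_mul_of_nonneg_right hXN hsr0.le
    have h4 : |GY * DS + DSY| * (r * sr) * r ^ 2 ≤
        100 * Real.exp (7 * P / (16 * r)) * r ^ 2 := by
      calc |GY * DS + DSY| * (r * sr) * r ^ 2
          = |GY * DS + DSY| * r ^ 3 * sr := by ring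
        _ ≤ (3 * sp * r ^ 2 + 6 * sp * r + 6 * sp * P) * sr := h2
        _ ≤ 100 * (Real.exp (7 * P / (16 * r)) * r ^ 2) := hkey
        _ = 100 * Real.exp (7 * P / (16 * r)) * r ^ 2 := by ring
    exact le_of_mul_le_mul_right h4 (by positivity)
  -- assemble
  clear hXpoly hXN hkey hseries hE2 hGYr hDSr hDSYr hga hdsb hdsyb
  obtain rfl : r = sr ^ 2 := hsr2.symm
  have hsrne : sr ≠ 0 := ne_of_gt hsr0
  have hexp_inv : Real.exp (-Real.log sr) = sr⁻¹ := by
    rw [Real.exp_neg, Real.exp_log hsr0]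
  have hlogsq : Real.log (sr ^ 2) = 2 * Real.log sr := by
    rw [Real.log_pow]; push_cast; ring
  have hG : Real.exp (-Real.log Real.pi / 2 - s / 2 - Real.log (sr ^ 2) / 2 -
      P / (2 * sr ^ 2)) =
      Real.exp (-Real.log Real.pi / 2) * Real.exp (-s / 2) * sr⁻¹ *
        (Real.exp (-P / (16 * sr ^ 2)) * (Real.exp (7 * P / (16 * sr ^ 2)))⁻¹) := by
    rw [← hexp_inv, ← Real.exp_neg, ← Real.exp_add, ← Real.exp_add, ← Real.exp_add,
      ← Real.exp_add]
    congr 1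
    rw [hlogsq]
    field_simp
    ring
  have hrpow : (sr ^ 2) ^ (-(2:ℝ)) = ((sr ^ 2) ^ 2)⁻¹ := by
    rw [show (-(2:ℝ)) = ((-2 : ℤ) : ℝ) by norm_num, Real.rpow_intCast, zpow_neg]
    congr 1
  have hcπ : Real.exp (-Real.log Real.pi / 2) ≤ 1 := by
    rw [Real.exp_le_one_iff]
    have : 0 ≤ Real.log Real.pi := Real.log_nonneg (by linarith [Real.pi_gt_three])
    linarith
  rw [abs_mul, abs_of_pos (Real.exp_pos _), hG, hrpow]
  calc Real.exp (-Real.log Real.pi / 2) * Real.exp (-s / 2) * sr⁻¹ *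
      (Real.exp (-P / (16 * sr ^ 2)) * (Real.exp (7 * P / (16 * sr ^ 2)))⁻¹) *
      |GY * DS + DSY|
      ≤ 1 * Real.exp (-s / 2) * sr⁻¹ *
        (Real.exp (-P / (16 * sr ^ 2)) * (Real.exp (7 * P / (16 * sr ^ 2)))⁻¹) *
        (100 * Real.exp (7 * P / (16 * sr ^ 2)) / (sr ^ 2 * sr)) := by
        gcongr
        all_goals first | exact hcπ | exact hXb | positivity
    _ = 100 * Real.exp (-P / (16 * sr ^ 2)) * Real.exp (-s / 2) * ((sr ^ 2) ^ 2)⁻¹ := by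
        field_simp

theorem stmt9 :
    ∃ C > 0, ∀ (y z s : ℝ), 0 < s →
      |deriv (fun y => deriv (fun s => hermiteHeatKernel s y z) s) y| ≤
        C * Real.exp (-((y - Real.exp (-s) * z) ^ 2 + (z - Real.exp (-s) * y) ^ 2) /
            (16 * (1 - Real.exp (-2 * s)))) *
          Real.exp (-s / 2) * (1 - Real.exp (-2 * s)) ^ (-(2 : ℝ)) := by
  refine ⟨100, by norm_num, fun y z s hs => ?_⟩
  have hfun : (fun y => deriv (fun s => hermiteHeatKernel s y z) s) =
      fun y => Real.exp (gAux z s y) * dsAux z s y :=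
    funext fun y => deriv_s_kernel z y hs
  rw [hfun, (hasDerivAt_prod z s y hs).deriv]
  exact main_bound z s y hs
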